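/- Let σ ∈ {1, -1}, τ = e^{πiσ/3}, and ε₁ ∈ {0, 1/2}. If β₊ ∈ ℂ satisfies β₊⁶ = 1, e^{(2πi/3)ε₁}·β₊·(conj(τ) - 1) = conj(β₊)·conj(τ), and e^{(2πi/3)ε₁}·β₊·conj(τ) = conj(β₊), then ε₁ = 1/2 and β₊ = ±e^{(πi/6)(σ-1)}. -/

import Mathlib

open Complex

theorem z6_beta_condition (σ : ℝ) (hσ : σ = 1 ∨ σ = -1)
    (τ : ℂ) (hτ : τ = Complex.exp (Real.pi * Complex.I * σ / 3))
    (ε₁ : ℝ) (hε : ε₁ = 0 ∨ ε₁ = 1/2)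
    (β : ℂ) (h6 : β ^ 6 = 1)
    (hD1 : Complex.exp (2 * Real.pi * Complex.I / 3 * ε₁) * β * ((starRingEnd ℂ) τ - 1)
        = (starRingEnd ℂ) β * (starRingEnd ℂ) τ)
    (hD2 : Complex.exp (2 * Real.pi * Complex.I / 3 * ε₁) * β * (starRingEnd ℂ) τ
        = (starRingEnd ℂ) β) :
    ε₁ = 1/2 ∧
      (β = Complex.exp (Real.pi * Complex.I / 6 * (σ - 1)) ∨
        β = -Complex.exp (Real.pi * Complex.I / 6 * (σ - 1))) := by
  have hb0 : β ≠ 0 := by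
    intro h; rw [h] at h6; norm_num at h6
  have habs : ‖β‖ = 1 := Complex.norm_eq_one_of_pow_eq_one h6 (by norm_num)
  have hconj : (starRingEnd ℂ) β = β ^ 5 := by
    have h1 : β⁻¹ = (starRingEnd ℂ) β := Complex.inv_eq_conj habs
    have h2 : β⁻¹ = β ^ 5 := by
      field_simp
      linear_combination -h6
    rw [← h1, h2]
  set E := Complex.exp (2 * Real.pi * Complex.I / 3 * (ε₁ : ℂ)) with hEdef
  have hct : (starRingEnd ℂ) τ = Complex.exp (-(Real.pi * Complex.I * σ / 3)) := by
    rw [hτ, ← Complex.exp_conj]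
    congr 1
    simp [map_div₀, map_ofNat, Complex.conj_I, Complex.conj_ofReal]
    ring
  have hβ4 : β ^ 4 = E * (starRingEnd ℂ) τ := by
    have h := hD2
    rw [hconj] at h
    have h2 : β * (E * (starRingEnd ℂ) τ) = β * β ^ 4 := by linear_combination h
    exact (mul_left_cancel₀ hb0 h2).symm
  have exp3 : ∀ z : ℂ, Complex.exp z ^ 3 = Complex.exp (z + z + z) := by
    intro z; rw [pow_succ, sq, ← Complex.exp_add, ← Complex.exp_add]
  have hcube : E ^ 3 * ((starRingEnd ℂ) τ) ^ 3 = 1 := by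
    have h12 : (β ^ 4) ^ 3 = 1 := by
      have h : (β ^ 4) ^ 3 = (β ^ 6) ^ 2 := by ring
      rw [h, h6, one_pow]
    rw [hβ4, mul_pow] at h12
    exact h12
  have hkey : Complex.exp (2 * Real.pi * Complex.I * ε₁ - Real.pi * Complex.I * σ) = 1 := by
    rw [hEdef, hct, exp3, exp3, ← Complex.exp_add] at hcube
    rw [← hcube]
    congr 1
    ring
  have hε2 : ε₁ = 1/2 := by
    rcases hε with h | h
    · exfalso
      subst h
      rcases hσ with h | h <;> subst h <;>
        simp only [Complex.ofReal_zero, Complex.ofReal_one, Complex.ofReal_neg] at hkey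
      · rw [show (2 * (Real.pi:ℂ) * Complex.I * 0 - Real.pi * Complex.I * 1)
            = -(Real.pi * Complex.I) by ring, Complex.exp_neg, Complex.exp_pi_mul_I] at hkey
        norm_num at hkey
      · rw [show (2 * (Real.pi:ℂ) * Complex.I * 0 - Real.pi * Complex.I * (-1))
            = Real.pi * Complex.I by ring, Complex.exp_pi_mul_I] at hkey
        norm_num at hkey
    · exact h
  subst hε2
  refine ⟨rfl, ?_⟩
  set c := Complex.exp (Real.pi * Complex.I / 6 * (σ - 1)) with hcdef
  have hc2 : c ^ 2 = Complex.exp (Real.pi * Complex.I * (σ - 1) / 3) := by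
    rw [hcdef, sq, ← Complex.exp_add]
    congr 1
    ring
  have hβ4' : β ^ 4 = Complex.exp (Real.pi * Complex.I * (1 - σ) / 3) := by
    rw [hβ4, hct, hEdef, ← Complex.exp_add]
    congr 1
    push_cast
    ring
  have h24 : c ^ 2 * β ^ 4 = 1 := by
    rw [hc2, hβ4', ← Complex.exp_add,
      show ((Real.pi:ℂ) * Complex.I * (σ - 1) / 3 + Real.pi * Complex.I * (1 - σ) / 3) = 0 by ring,
      Complex.exp_zero]
  have hb2 : β ^ 2 = c ^ 2 := by
    have h4ne : β ^ 4 ≠ 0 := pow_ne_zero _ hb0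
    have h : β ^ 2 * β ^ 4 = c ^ 2 * β ^ 4 := by
      rw [h24]
      calc β ^ 2 * β ^ 4 = β ^ 6 := by ring
        _ = 1 := h6
    exact mul_right_cancel₀ h4ne h
  have hfac : (β - c) * (β + c) = 0 := by linear_combination hb2
  rcases mul_eq_zero.mp hfac with h | h
  · exact Or.inl (sub_eq_zero.mp h)
  · exact Or.inr (eq_neg_of_add_eq_zero_left h)
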